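/- arXiv:2511.02073 — 2 statements merged into one kernel-verified Lean document; each statement's English description precedes it below -/
import Mathlib

section
/- Let A, B be symmetric n×n real matrices, Q a symmetric n×n matrix, and u a unit vector in R^n, and suppose [[A,0],[0,-B]] ≤ [[Q,-Q],[-Q,Q]] in the Loewner order. If moreover Q = P + 2ε·P² for a symmetric matrix P with ⟨Pu, u⟩ = φ'' and ε ≥ 0, then Trace(A - B) ≤ 2φ'' + 4ε·‖Pu‖². -/
open Matrix

/-- For a PSD real matrix `N` and a unit vector `u`, `⟨N u, u⟩ ≤ trace N`. -/
lemma quadForm_le_trace (n : ℕ) (N : Matrix (Fin n) (Fin n) ℝ) (hN : N.PosSemidef)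
    (u : Fin n → ℝ) (hu : u ⬝ᵥ u = 1) : N.mulVec u ⬝ᵥ u ≤ N.trace := by
  obtain ⟨C, rfl⟩ : ∃ C : Matrix (Fin n) (Fin n) ℝ, N = Cᴴ * C := by
    open scoped MatrixOrder in exact CStarAlgebra.nonneg_iff_eq_star_mul_self.mp hN.nonneg
  rw [conjTranspose_eq_transpose_of_trivial]
  have hu' : ∑ j, u j ^ 2 = 1 := by simpa [dotProduct, sq] using hu
  have h1 : (Cᵀ * C) *ᵥ u ⬝ᵥ u = ∑ i, (∑ j, C i j * u j) ^ 2 := by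
    rw [← mulVec_mulVec, mulVec_transpose, ← dotProduct_mulVec]
    simp [dotProduct, mulVec, sq]
  have h2 : (Cᵀ * C).trace = ∑ i, ∑ j, C i j ^ 2 := by
    rw [trace, Finset.sum_comm]
    simp [diag, mul_apply, sq]
  rw [h1, h2]
  refine Finset.sum_le_sum fun i _ => ?_
  calc (∑ j, C i j * u j) ^ 2 ≤ (∑ j, C i j ^ 2) * ∑ j, u j ^ 2 :=
        Finset.sum_mul_sq_le_sq_mul_sq _ _ _
    _ = ∑ j, C i j ^ 2 := by rw [hu', mul_one]

/-- If `[[A,0],[0,-B]] ≤ [[Q,-Q],[-Q,Q]]` with `Q = P + 2ε P²`, `P` symmetric,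
`⟨P u, u⟩ = φ''` for a unit vector `u` and `ε ≥ 0`, then
`Trace(A - B) ≤ 2 φ'' + 4 ε ‖P u‖²`. -/
theorem stmt_3 (n : ℕ) (A B P Q : Matrix (Fin n) (Fin n) ℝ)
    (hA : A.IsSymm) (hB : B.IsSymm) (hP : P.IsSymm)
    (u : Fin n → ℝ) (hu : u ⬝ᵥ u = 1)
    (h : (Matrix.fromBlocks Q (-Q) (-Q) Q - Matrix.fromBlocks A 0 0 (-B)).PosSemidef)
    (ε φ'' : ℝ) (hε : 0 ≤ ε)
    (hQ : Q = P + (2 * ε) • P ^ 2)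
    (hφ : P.mulVec u ⬝ᵥ u = φ'') :
    (A - B).trace ≤ 2 * φ'' + 4 * ε * (P.mulVec u ⬝ᵥ P.mulVec u) := by
  -- general quadratic form inequality from `h`
  have key : ∀ x y : Fin n → ℝ,
      0 ≤ Q *ᵥ x ⬝ᵥ x - Q *ᵥ y ⬝ᵥ x - Q *ᵥ x ⬝ᵥ y + Q *ᵥ y ⬝ᵥ y
          - A *ᵥ x ⬝ᵥ x + B *ᵥ y ⬝ᵥ y := by
    intro x y
    have hM : Matrix.fromBlocks Q (-Q) (-Q) Q - Matrix.fromBlocks A 0 0 (-B)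
        = fromBlocks (Q - A) (-Q) (-Q) (Q + B) := by
      ext i j; cases i <;> cases j <;> simp [fromBlocks]
    have := (posSemidef_iff_dotProduct_mulVec.mp h).2 (Sum.elim x y)
    rw [hM, show (Sum.elim x y : Fin n ⊕ Fin n → ℝ) = x ⊕ᵥ y from rfl,
      fromBlocks_mulVec] at this
    simp only [Sum.elim_comp_inl, Sum.elim_comp_inr, star_trivial,
      sumElim_dotProduct_sumElim, sub_mulVec, add_mulVec, neg_mulVec,
      dotProduct_add, dotProduct_sub, dotProduct_neg] at this
    linarith [dotProduct_comm x (Q *ᵥ x), dotProduct_comm y (Q *ᵥ y),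
      dotProduct_comm x (Q *ᵥ y), dotProduct_comm y (Q *ᵥ x),
      dotProduct_comm x (A *ᵥ x), dotProduct_comm y (B *ᵥ y)]
  -- B - A is positive semidefinite
  have hBA : (B - A).PosSemidef := by
    refine posSemidef_iff_dotProduct_mulVec.mpr ⟨?_, ?_⟩
    · show (B - A)ᴴ = B - A
      have : (B - A)ᵀ = B - A := by rw [transpose_sub, hA, hB]
      simpa using this
    · intro x
      have hk := key x x
      simp only [star_trivial, sub_mulVec]
      rw [dotProduct_comm, sub_dotProduct]
      linarith
  -- two special test vectors involving u
  have h1 : 0 ≤ Q *ᵥ u ⬝ᵥ u - A *ᵥ u ⬝ᵥ u := by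
    have := key u 0
    simpa using this
  have h2 : 0 ≤ Q *ᵥ u ⬝ᵥ u + B *ᵥ u ⬝ᵥ u := by
    have := key 0 u
    simpa using this
  -- trace bound via the unit vector
  have htr : (B - A) *ᵥ u ⬝ᵥ u ≤ (B - A).trace :=
    quadForm_le_trace n (B - A) hBA u hu
  have htr' : (A - B).trace ≤ A *ᵥ u ⬝ᵥ u - B *ᵥ u ⬝ᵥ u := by
    have e1 : (B - A).trace = B.trace - A.trace := trace_sub B A
    have e2 : (A - B).trace = A.trace - B.trace := trace_sub A B
    have e3 : (B - A) *ᵥ u ⬝ᵥ u = B *ᵥ u ⬝ᵥ u - A *ᵥ u ⬝ᵥ u := by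
      rw [sub_mulVec, sub_dotProduct]
    linarith
  -- compute the quadratic form of Q at u
  have hQu : Q *ᵥ u ⬝ᵥ u = φ'' + 2 * ε * (P *ᵥ u ⬝ᵥ P *ᵥ u) := by
    have hPP : (P ^ 2) *ᵥ u ⬝ᵥ u = P *ᵥ u ⬝ᵥ P *ᵥ u := by
      rw [sq, ← mulVec_mulVec]
      nth_rewrite 1 [← hP]
      rw [mulVec_transpose, ← dotProduct_mulVec]
    rw [hQ, add_mulVec, smul_mulVec, add_dotProduct, smul_dotProduct, hPP, hφ]
    simp [smul_eq_mul]
  linarith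
end

section
/- Let F(x, z, p, A) = -Trace(𝒜(p)·A) + ⟨b(x), p⟩ + c·z where 𝒜(p) is symmetric with 𝒜(p) ≥ λI for all p (λ > 0), ‖b(x)‖ ≤ B for all x, and c > 0. Suppose x, y ∈ R^n with ‖x-y‖ = 2s > 0, z, w ∈ R with w - z = 2φ(s) ≥ 0, u = (x-y)/‖x-y‖, p = φ'(s)·u, and A, B' ∈ S(n) satisfy Trace(A - B') ≤ 2φ''(s) + εq₀ for some q₀ ≥ 0 and A ≤ B'. Then F(y, z, p, B') - F(x, w, p, A) ≤ -2(-λφ''(s) - B|φ'(s)| + cφ(s)) + ελq₀. -/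
open Matrix

lemma psd_trace_nonneg {n : ℕ} {M : Matrix (Fin n) (Fin n) ℝ}
    (hM : M.PosSemidef) : 0 ≤ M.trace := by
  rw [Matrix.trace]
  apply Finset.sum_nonneg
  intro i _
  exact hM.diag_nonneg

open scoped MatrixOrder in
lemma psd_trace_mul_nonneg {n : ℕ} {P Q : Matrix (Fin n) (Fin n) ℝ}
    (hP : P.PosSemidef) (hQ : Q.PosSemidef) : 0 ≤ (P * Q).trace := by
  have hS := (CFC.sqrt_nonneg P).posSemidef
  have h1 : P * Q = CFC.sqrt P * (CFC.sqrt P * Q) := by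
    rw [← mul_assoc, CFC.sqrt_mul_sqrt_self P hP.nonneg]
  rw [h1, Matrix.trace_mul_comm]
  have heq : CFC.sqrt P * Q * CFC.sqrt P = CFC.sqrt P * Q * (CFC.sqrt P)ᴴ := by
    rw [hS.1.eq]
  have h2 : (CFC.sqrt P * Q * CFC.sqrt P).PosSemidef := by
    rw [heq]; exact hQ.mul_mul_conjTranspose_same _
  simpa [mul_assoc] using psd_trace_nonneg h2

/-- Verification of the structure condition for
`F(x,z,p,A) = -Trace(𝒜(p) A) + ⟨b(x), p⟩ + c z` with `𝒜(p) ≥ λ I`, `‖b‖ ≤ B`,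
`c > 0`: if `A ≤ B'` and `Trace(A - B') ≤ 2φ'' + ε q₀`, then with `p = φ' u`,
`u = (x-y)/‖x-y‖`, `w - z = 2φ(s) ≥ 0`,
`F(y,z,p,B') - F(x,w,p,A) ≤ -2(-λφ'' - B|φ'| + cφ) + ε λ q₀`. -/
theorem stmt_15 (n : ℕ)
    (𝒜 : EuclideanSpace ℝ (Fin n) → Matrix (Fin n) (Fin n) ℝ)
    (h𝒜sym : ∀ p, (𝒜 p).IsSymm)
    (lam : ℝ) (hlam : 0 < lam)
    (h𝒜 : ∀ p, ((𝒜 p) - lam • (1 : Matrix (Fin n) (Fin n) ℝ)).PosSemidef)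
    (b : EuclideanSpace ℝ (Fin n) → EuclideanSpace ℝ (Fin n))
    (Bb : ℝ) (hb : ∀ x, ‖b x‖ ≤ Bb)
    (c : ℝ) (hc : 0 < c)
    (F : EuclideanSpace ℝ (Fin n) → ℝ → EuclideanSpace ℝ (Fin n) →
      Matrix (Fin n) (Fin n) ℝ → ℝ)
    (hF : ∀ x z p A, F x z p A = -((𝒜 p * A).trace) + (inner ℝ (b x) p : ℝ) + c * z)
    (x y : EuclideanSpace ℝ (Fin n)) (s : ℝ) (hs : 0 < s) (hxy : ‖x - y‖ = 2 * s)
    (z w φs φ' φ'' : ℝ) (hwz : w - z = 2 * φs) (hφs : 2 * φs ≥ 0)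
    (uv p : EuclideanSpace ℝ (Fin n))
    (hu : uv = ‖x - y‖⁻¹ • (x - y)) (hp : p = φ' • uv)
    (A B' : Matrix (Fin n) (Fin n) ℝ) (hA : A.IsSymm) (hB' : B'.IsSymm)
    (hord : (B' - A).PosSemidef)
    (ε q₀ : ℝ) (hε : 0 ≤ ε) (hq₀ : 0 ≤ q₀)
    (htr : (A - B').trace ≤ 2 * φ'' + ε * q₀) :
    F y z p B' - F x w p A ≤ -2 * (-lam * φ'' - Bb * |φ'| + c * φs) + ε * lam * q₀ := by
  rw [hF, hF]
  have h2s : (0:ℝ) < 2 * s := by linarith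
  have hnormuv : ‖uv‖ = 1 := by
    rw [hu, norm_smul, hxy, Real.norm_eq_abs, abs_inv, abs_of_pos h2s]
    field_simp
  have hnormp : ‖p‖ = |φ'| := by
    rw [hp, norm_smul, hnormuv, Real.norm_eq_abs, mul_one]
  have h1 : (inner ℝ (b y) p : ℝ) ≤ Bb * |φ'| := by
    calc (inner ℝ (b y) p : ℝ) ≤ ‖b y‖ * ‖p‖ := real_inner_le_norm _ _
      _ ≤ Bb * |φ'| := by
        rw [hnormp]; exact mul_le_mul_of_nonneg_right (hb y) (abs_nonneg _)
  have h2 : -(inner ℝ (b x) p : ℝ) ≤ Bb * |φ'| := by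
    calc -(inner ℝ (b x) p : ℝ) ≤ |(inner ℝ (b x) p : ℝ)| := neg_le_abs _
      _ ≤ ‖b x‖ * ‖p‖ := abs_real_inner_le_norm _ _
      _ ≤ Bb * |φ'| := by
        rw [hnormp]; exact mul_le_mul_of_nonneg_right (hb x) (abs_nonneg _)
  have hsplit : (𝒜 p * A).trace - (𝒜 p * B').trace
      = -(((𝒜 p - lam • 1) * (B' - A)).trace) + lam * (A - B').trace := by
    simp only [Matrix.sub_mul, Matrix.mul_sub, Matrix.smul_mul, Matrix.one_mul,
      Matrix.trace_sub, Matrix.trace_smul, smul_eq_mul]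
    ring
  have h0 : 0 ≤ ((𝒜 p - lam • 1) * (B' - A)).trace :=
    psd_trace_mul_nonneg (h𝒜 p) hord
  have hkey : (𝒜 p * A).trace - (𝒜 p * B').trace ≤ lam * (2 * φ'' + ε * q₀) := by
    have := mul_le_mul_of_nonneg_left htr hlam.le
    rw [hsplit]; linarith
  have hzw : c * z - c * w = -(c * (2 * φs)) := by rw [← hwz]; ring
  nlinarith [hkey, h1, h2, hzw]
end
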